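/- Let G be an undirected edge-weighted graph with spanning tree T, and let e' be a descendant edge of e in T (e' lies in the subtree below e). Then the weight of the cut of G determined by {e,e'} equals w(T_e) + w(T_{e'}) - 2·w(T_{e'}, V \ T_e), where w(T_{e'}, V \ T_e) is the total weight of graph edges with one endpoint in T_{e'} and the other outside T_e. -/
import Mathlib


open Finset

/-- Total weight of graph edges with one endpoint in `A` and the other in `B`
(summed over ordered pairs). -/
def betw {V : Type*} [Fintype V] (w : V → V → ℝ) (A B : Finset V) : ℝ :=
  ∑ u ∈ A, ∑ v ∈ B, w u v

/-- Weight of the cut `(S, V \\ S)`: total weight of edges leaving `S`. -/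
def cutw {V : Type*} [Fintype V] [DecidableEq V] (w : V → V → ℝ) (S : Finset V) : ℝ :=
  betw w S Sᶜ

/-- If `e'` is a descendant tree edge of `e`, so that the subtrees satisfy
`Te' ⊆ Te`, then the weight of the cut determined by {e,e'}, i.e. the cut
`(Te \ Te', V \ (Te \ Te'))`, equals `w(Te) + w(Te') - 2 w(Te', V \ Te)`. -/
theorem stmt_1 {V : Type*} [Fintype V] [DecidableEq V] (w : V → V → ℝ)
    (hsym : ∀ u v, w u v = w v u) (hnn : ∀ u v, 0 ≤ w u v)
    (Te Te' : Finset V) (hsub : Te' ⊆ Te) :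
    cutw w (Te \ Te') = cutw w Te + cutw w Te' - 2 * betw w Te' Teᶜ := by
  have hbadd1 : ∀ (A B C : Finset V), Disjoint B C →
      betw w A (B ∪ C) = betw w A B + betw w A C := by
    intro A B C h
    simp [betw, Finset.sum_union h, Finset.sum_add_distrib]
  have hbadd2 : ∀ (A B C : Finset V), Disjoint A B →
      betw w (A ∪ B) C = betw w A C + betw w B C := by
    intro A B C h
    simp [betw, Finset.sum_union h]
  have hbsym : ∀ (A B : Finset V), betw w A B = betw w B A := by
    intro A B
    simpa [betw, hsym] using Finset.sum_comm (s := A) (t := B) (f := fun u v => w u v)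
  have h1 : (Te \ Te')ᶜ = Teᶜ ∪ Te' := by
    ext x; simp [Finset.mem_sdiff]; tauto
  have h2 : Te = (Te \ Te') ∪ Te' := (Finset.sdiff_union_of_subset hsub).symm
  have hd1 : Disjoint (Teᶜ : Finset V) Te' := by
    rw [Finset.disjoint_left]
    intro a ha hb
    exact (Finset.mem_compl.mp ha) (hsub hb)
  have hd2 : Disjoint (Te \ Te') Te' := Finset.sdiff_disjoint
  have hd3 : Disjoint (Te \ Te') (Teᶜ : Finset V) := by
    rw [Finset.disjoint_left]
    intro a ha hb
    exact (Finset.mem_compl.mp hb) (Finset.mem_sdiff.mp ha).1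
  have e0 : cutw w (Te \ Te') = betw w (Te \ Te') Teᶜ + betw w (Te \ Te') Te' := by
    rw [cutw, h1, hbadd1 _ _ _ hd1]
  have e1 : cutw w Te = betw w (Te \ Te') Teᶜ + betw w Te' Teᶜ := by
    rw [cutw]; nth_rewrite 1 [h2]; exact hbadd2 _ _ _ hd2
  have hc : (Te' : Finset V)ᶜ = (Te \ Te') ∪ Teᶜ := by
    ext x; by_cases hx : x ∈ Te <;> simp [Finset.mem_sdiff, hx] <;> tauto
  have e2 : cutw w Te' = betw w Te' (Te \ Te') + betw w Te' Teᶜ := by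
    rw [cutw, hc, hbadd1 _ _ _ hd3]
  have e3 := hbsym (Te \ Te') Te'
  linarith
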